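/- Let a < b be positive integers. The curvature of the plane curve t ↦ (Re γ_{a,b}(t), Im γ_{a,b}(t)) at any t where the speed is nonzero equals κ(t) = (a³ + b³ + ab(a+b)cos(2π(a−b)t)) / (a² + b² + 2ab cos(2π(a−b)t))^{3/2}, and this quantity is strictly positive whenever a ≠ b. -/

import Mathlib

open Complex

private lemma hdCos (c t : ℝ) :
    HasDerivAt (fun s : ℝ => Real.cos (c * s)) (-(c * Real.sin (c * t))) t := by
  have h := (Real.hasDerivAt_cos (c * t)).comp t ((hasDerivAt_id t).const_mul c)
  simpa [mul_comm, Function.comp_def] using h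

private lemma hdSin (c t : ℝ) :
    HasDerivAt (fun s : ℝ => Real.sin (c * s)) (c * Real.cos (c * t)) t := by
  have h := (Real.hasDerivAt_sin (c * t)).comp t ((hasDerivAt_id t).const_mul c)
  simpa [mul_comm, Function.comp_def] using h

theorem gamma_curvature (a b : ℕ) (ha : 0 < a) (hab : a < b) (t : ℝ)
    (x y : ℝ → ℝ)
    (hx : x = fun s : ℝ => (Complex.exp (2 * Real.pi * Complex.I * (a : ℂ) * (s : ℂ)) +
        Complex.exp (2 * Real.pi * Complex.I * (b : ℂ) * (s : ℂ))).re)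
    (hy : y = fun s : ℝ => (Complex.exp (2 * Real.pi * Complex.I * (a : ℂ) * (s : ℂ)) +
        Complex.exp (2 * Real.pi * Complex.I * (b : ℂ) * (s : ℂ))).im)
    (hspeed : (deriv x t) ^ 2 + (deriv y t) ^ 2 ≠ 0) :
    (deriv x t * deriv (deriv y) t - deriv y t * deriv (deriv x) t) /
        ((deriv x t) ^ 2 + (deriv y t) ^ 2) ^ ((3 : ℝ) / 2) =
      ((a : ℝ) ^ 3 + (b : ℝ) ^ 3 + (a : ℝ) * b * ((a : ℝ) + b) * Real.cos (2 * Real.pi * ((a : ℝ) - b) * t)) /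
        ((a : ℝ) ^ 2 + (b : ℝ) ^ 2 + 2 * a * b * Real.cos (2 * Real.pi * ((a : ℝ) - b) * t)) ^ ((3 : ℝ) / 2) ∧
    0 < ((a : ℝ) ^ 3 + (b : ℝ) ^ 3 + (a : ℝ) * b * ((a : ℝ) + b) * Real.cos (2 * Real.pi * ((a : ℝ) - b) * t)) /
        ((a : ℝ) ^ 2 + (b : ℝ) ^ 2 + 2 * a * b * Real.cos (2 * Real.pi * ((a : ℝ) - b) * t)) ^ ((3 : ℝ) / 2) := by
  set π := Real.pi with hπ
  set A : ℝ := 2 * π * a with hA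
  set B : ℝ := 2 * π * b with hB
  -- rewrite x, y in terms of cos and sin
  have hxA : ∀ (c : ℕ) (s : ℝ),
      (2 : ℂ) * (π : ℝ) * Complex.I * (c : ℂ) * (s : ℂ) = ((2 * π * c * s : ℝ) : ℂ) * Complex.I := by
    intro c s; push_cast; ring
  have hx' : x = fun s : ℝ => Real.cos (A * s) + Real.cos (B * s) := by
    rw [hx]; funext s
    rw [Complex.add_re, hxA a s, hxA b s, Complex.exp_ofReal_mul_I_re,
      Complex.exp_ofReal_mul_I_re]
  have hy' : y = fun s : ℝ => Real.sin (A * s) + Real.sin (B * s) := by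
    rw [hy]; funext s
    rw [Complex.add_im, hxA a s, hxA b s, Complex.exp_ofReal_mul_I_im,
      Complex.exp_ofReal_mul_I_im]
  -- derivatives
  have hdx : deriv x = fun s : ℝ => -(A * Real.sin (A * s)) + -(B * Real.sin (B * s)) := by
    funext s; rw [hx']; exact ((hdCos A s).add (hdCos B s)).deriv
  have hdy : deriv y = fun s : ℝ => A * Real.cos (A * s) + B * Real.cos (B * s) := by
    funext s; rw [hy']; exact ((hdSin A s).add (hdSin B s)).deriv
  have hddx : deriv (deriv x) t = -(A * (A * Real.cos (A * t))) + -(B * (B * Real.cos (B * t))) := by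
    rw [hdx]
    exact (((hdSin A t).const_mul A).neg.add ((hdSin B t).const_mul B).neg).deriv
  have hddy : deriv (deriv y) t = A * -(A * Real.sin (A * t)) + B * -(B * Real.sin (B * t)) := by
    rw [hdy]
    exact (((hdCos A t).const_mul A).add ((hdCos B t).const_mul B)).deriv
  have hdxt : deriv x t = -(A * Real.sin (A * t)) + -(B * Real.sin (B * t)) := by rw [hdx]
  have hdyt : deriv y t = A * Real.cos (A * t) + B * Real.cos (B * t) := by rw [hdy]
  -- abbreviations
  have hcos : Real.cos (2 * π * ((a : ℝ) - b) * t) =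
      Real.cos (A * t) * Real.cos (B * t) + Real.sin (A * t) * Real.sin (B * t) := by
    have : 2 * π * ((a : ℝ) - b) * t = A * t - B * t := by rw [hA, hB]; ring
    rw [this, Real.cos_sub]
  set C : ℝ := Real.cos (2 * π * ((a : ℝ) - b) * t) with hC
  have hπpos : (0 : ℝ) < π := Real.pi_pos
  have hbpos : (0 : ℝ) < b := by exact_mod_cast ha.trans hab
  have hapos : (0 : ℝ) < a := by exact_mod_cast ha
  have habR : (a : ℝ) < b := by exact_mod_cast hab
  -- denominator positivity
  have hC1 : -1 ≤ C := Real.neg_one_le_cos _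
  have hC2 : C ≤ 1 := Real.cos_le_one _
  have hsq : (0 : ℝ) < ((b : ℝ) - a) * ((b : ℝ) - a) :=
    mul_pos (sub_pos.2 habR) (sub_pos.2 habR)
  have hD : (0 : ℝ) < (a : ℝ) ^ 2 + (b : ℝ) ^ 2 + 2 * a * b * C := by
    nlinarith [mul_pos hapos hbpos]
  have hN : (0 : ℝ) < (a : ℝ) ^ 3 + (b : ℝ) ^ 3 + (a : ℝ) * b * ((a : ℝ) + b) * C := by
    nlinarith [mul_pos (add_pos hapos hbpos) hsq, mul_pos (mul_pos hapos hbpos) (add_pos hapos hbpos)]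
  set D : ℝ := (a : ℝ) ^ 2 + (b : ℝ) ^ 2 + 2 * a * b * C with hDdef
  set N : ℝ := (a : ℝ) ^ 3 + (b : ℝ) ^ 3 + (a : ℝ) * b * ((a : ℝ) + b) * C with hNdef
  -- identities
  have hs2c2 : ∀ θ : ℝ, Real.sin θ ^ 2 + Real.cos θ ^ 2 = 1 := Real.sin_sq_add_cos_sq
  have hnum : deriv x t * deriv (deriv y) t - deriv y t * deriv (deriv x) t
      = (2 * π) ^ 3 * N := by
    rw [hdxt, hdyt, hddx, hddy, hNdef, hcos, hA, hB]
    linear_combination ((2 * π) ^ 3 * (a : ℝ) ^ 3) * Real.sin_sq_add_cos_sq (2 * π * a * t) +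
      ((2 * π) ^ 3 * (b : ℝ) ^ 3) * Real.sin_sq_add_cos_sq (2 * π * b * t)
  have hden : (deriv x t) ^ 2 + (deriv y t) ^ 2 = (2 * π) ^ 2 * D := by
    rw [hdxt, hdyt, hDdef, hcos, hA, hB]
    linear_combination ((2 * π) ^ 2 * (a : ℝ) ^ 2) * Real.sin_sq_add_cos_sq (2 * π * a * t) +
      ((2 * π) ^ 2 * (b : ℝ) ^ 2) * Real.sin_sq_add_cos_sq (2 * π * b * t)
  have h2π : (0 : ℝ) < 2 * π := by linarith
  have hrpow : ((2 * π) ^ 2 * D) ^ ((3 : ℝ) / 2) = (2 * π) ^ 3 * D ^ ((3 : ℝ) / 2) := by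
    rw [Real.mul_rpow (by positivity) hD.le]
    congr 1
    rw [← Real.rpow_natCast (2 * π) 2, ← Real.rpow_natCast (2 * π) 3,
      ← Real.rpow_mul h2π.le]
    norm_num
  constructor
  · rw [hnum, hden, hrpow]
    rw [mul_div_mul_left _ _ (by positivity : ((2 * π) ^ 3 : ℝ) ≠ 0)]
  · exact div_pos hN (Real.rpow_pos_of_pos hD _)
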